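/- arXiv:1306.5540 — 3 statements merged into one kernel-verified Lean document; each statement's English description precedes it below -/
import Mathlib

section
/- Let φ : ℕ → ℂ be such that both h = (φ(i+j) - φ(i+j+1))_{i,j≥0} and k = (φ(i+j+1) - φ(i+j+2))_{i,j≥0} are trace class on ℓ²(ℕ). Then Σ_{n=0}^∞ |φ(n) - φ(n+1)| ≤ ‖h‖₁ + ‖k‖₁ < ∞, where ‖·‖₁ is the trace-class norm. -/
open scoped ComplexConjugate
open Filter
noncomputable section

/-- The Hilbert space ℓ²(ℕ). -/
abbrev l2 : Type := lp (fun _ : ℕ => ℂ) 2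

/-- Standard orthonormal basis vector. -/
noncomputable def eb (n : ℕ) : l2 := lp.single 2 n 1

/-- The rank-one operator `(u ⊙ v)(t) = ⟨t, v⟩ u`. -/
noncomputable def rankOne (u v : l2) : l2 →L[ℂ] l2 := (innerSL ℂ v).smulRight u

/-- `x, y` form a rank-one decomposition of `T` with summable norms. -/
def IsTCDecomp (T : l2 →L[ℂ] l2) (x y : ℕ → l2) : Prop :=
  Summable (fun i => ‖x i‖ * ‖y i‖) ∧
  ∀ ξ : l2, HasSum (fun i => rankOne (x i) (y i) ξ) (T ξ)

/-- `T` is of trace class. -/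
def TraceClass (T : l2 →L[ℂ] l2) : Prop := ∃ x y, IsTCDecomp T x y

/-- The trace-class (nuclear) norm `‖T‖₁`. -/
noncomputable def traceNorm (T : l2 →L[ℂ] l2) : ℝ :=
  sInf { c | ∃ x y, IsTCDecomp T x y ∧ c = ∑' i, ‖x i‖ * ‖y i‖ }

/-- `T` has matrix entries `ψ(i+j)` in the standard basis, i.e. `T` is the Hankel
matrix of the sequence `ψ`. -/
def HasHankel (T : l2 →L[ℂ] l2) (ψ : ℕ → ℂ) : Prop :=
  ∀ i j : ℕ, (inner ℂ (eb i) (T (eb j)) : ℂ) = ψ (i + j)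

lemma eb_orthonormal : Orthonormal ℂ eb := by
  rw [orthonormal_iff_ite]
  intro i j
  rw [eb, eb, lp.inner_single_left]
  simp [lp.single_apply, Pi.single_apply, eq_comm]

lemma diag_le (T : l2 →L[ℂ] l2) (x y : ℕ → l2) (hd : IsTCDecomp T x y) :
    Summable (fun i => ‖(inner ℂ (eb i) (T (eb i)) : ℂ)‖) ∧
      ∑' i, ‖(inner ℂ (eb i) (T (eb i)) : ℂ)‖ ≤ ∑' i, ‖x i‖ * ‖y i‖ := by
  classical
  set g : ℕ × ℕ → ℝ := fun p =>
    ‖(inner ℂ (eb p.2) (y p.1) : ℂ)‖ * ‖(inner ℂ (eb p.2) (x p.1) : ℂ)‖ with hg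
  have gnn : ∀ p, 0 ≤ g p := fun p => mul_nonneg (norm_nonneg _) (norm_nonneg _)
  -- rows summable
  have hrow : ∀ m, Summable fun i => g (m, i) := by
    intro m
    have h1 := eb_orthonormal.inner_products_summable (x := y m)
    have h2 := eb_orthonormal.inner_products_summable (x := x m)
    refine Summable.of_nonneg_of_le (fun i => gnn _) (fun i => ?_) ((h1.add h2).div_const 2)
    have := two_mul_le_add_sq ‖(inner ℂ (eb i) (y m) : ℂ)‖ ‖(inner ℂ (eb i) (x m) : ℂ)‖
    simp only [g]
    nlinarith [norm_nonneg ((inner ℂ (eb i) (y m) : ℂ)), norm_nonneg ((inner ℂ (eb i) (x m) : ℂ))]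
  -- row sums bounded by ‖x m‖ * ‖y m‖
  have hrowsum : ∀ m, (∑' i, g (m, i)) ≤ ‖x m‖ * ‖y m‖ := by
    intro m
    refine tsum_le_of_sum_le' (mul_nonneg (norm_nonneg _) (norm_nonneg _)) (fun s => ?_)
    have hcs := Finset.sum_mul_sq_le_sq_mul_sq s
      (fun i => ‖(inner ℂ (eb i) (y m) : ℂ)‖) (fun i => ‖(inner ℂ (eb i) (x m) : ℂ)‖)
    have hb1 : (∑ i ∈ s, ‖(inner ℂ (eb i) (y m) : ℂ)‖ ^ 2) ≤ ‖y m‖ ^ 2 :=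
      eb_orthonormal.sum_inner_products_le (y m)
    have hb2 : (∑ i ∈ s, ‖(inner ℂ (eb i) (x m) : ℂ)‖ ^ 2) ≤ ‖x m‖ ^ 2 :=
      eb_orthonormal.sum_inner_products_le (x m)
    have hs0 : (0:ℝ) ≤ ∑ i ∈ s, g (m, i) := Finset.sum_nonneg fun i _ => gnn _
    have hsq : (∑ i ∈ s, g (m, i)) ^ 2 ≤ (‖x m‖ * ‖y m‖) ^ 2 := by
      calc (∑ i ∈ s, g (m, i)) ^ 2
          ≤ (∑ i ∈ s, ‖(inner ℂ (eb i) (y m) : ℂ)‖ ^ 2) *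
            (∑ i ∈ s, ‖(inner ℂ (eb i) (x m) : ℂ)‖ ^ 2) := hcs
        _ ≤ ‖y m‖ ^ 2 * ‖x m‖ ^ 2 := by
            apply mul_le_mul hb1 hb2 (Finset.sum_nonneg fun i _ => sq_nonneg _)
              (sq_nonneg _)
        _ = (‖x m‖ * ‖y m‖) ^ 2 := by ring
    nlinarith [mul_nonneg (norm_nonneg (x m)) (norm_nonneg (y m))]
  -- g summable on the product
  have hgs : Summable g := by
    refine (summable_prod_of_nonneg gnn).2 ⟨hrow, ?_⟩
    exact Summable.of_nonneg_of_le (fun m => tsum_nonneg fun i => gnn _) hrowsum hd.1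
  -- the diagonal entry as a series over m
  have hdiag : ∀ i, HasSum (fun m => (inner ℂ (y m) (eb i) : ℂ) * (inner ℂ (eb i) (x m) : ℂ))
      (inner ℂ (eb i) (T (eb i)) : ℂ) := by
    intro i
    have := (hd.2 (eb i)).mapL (innerSL ℂ (eb i))
    convert this using 2 with m
    · rfl
    · simp [rankOne, inner_smul_right]
    · rfl
  have hcol : ∀ i, Summable fun m => g (m, i) := by
    intro i
    have hinj : Function.Injective (fun m : ℕ => (m, i)) := fun a b hab => by
      simpa using congrArg Prod.fst hab
    exact hgs.comp_injective hinj
  have hdle : ∀ i, ‖(inner ℂ (eb i) (T (eb i)) : ℂ)‖ ≤ ∑' m, g (m, i) := by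
    intro i
    have := (hdiag i).tsum_eq
    rw [← this]
    refine (norm_tsum_le_tsum_norm ?_).trans_eq ?_
    · exact (hcol i).congr fun m => by
        simp [g, norm_mul, norm_inner_symm (y m) (eb i)]
    · exact tsum_congr fun m => by
        simp [g, norm_mul, norm_inner_symm (y m) (eb i)]
  -- swapped summability
  have hgs' : Summable fun p : ℕ × ℕ => g (p.2, p.1) := by
    have := hgs.prod_symm
    exact this.congr fun p => rfl
  have hcolsums : Summable fun i => ∑' m, g (m, i) :=
    ((summable_prod_of_nonneg (fun p => gnn _)).1 hgs').2
  have hsummable : Summable fun i => ‖(inner ℂ (eb i) (T (eb i)) : ℂ)‖ :=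
    Summable.of_nonneg_of_le (fun i => norm_nonneg _) hdle hcolsums
  refine ⟨hsummable, ?_⟩
  calc ∑' i, ‖(inner ℂ (eb i) (T (eb i)) : ℂ)‖
      ≤ ∑' i, ∑' m, g (m, i) := Summable.tsum_le_tsum hdle hsummable hcolsums
    _ = ∑' m, ∑' i, g (m, i) := by
        exact (Summable.tsum_comm' hgs hrow hcol)
    _ ≤ ∑' m, ‖x m‖ * ‖y m‖ :=
        Summable.tsum_le_tsum hrowsum ((summable_prod_of_nonneg gnn).1 hgs).2 hd.1

lemma diag_le_traceNorm (T : l2 →L[ℂ] l2) (hT : TraceClass T) :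
    Summable (fun i => ‖(inner ℂ (eb i) (T (eb i)) : ℂ)‖) ∧
      ∑' i, ‖(inner ℂ (eb i) (T (eb i)) : ℂ)‖ ≤ traceNorm T := by
  obtain ⟨x, y, hd⟩ := hT
  obtain ⟨hs, hle⟩ := diag_le T x y hd
  refine ⟨hs, le_csInf ⟨_, x, y, hd, rfl⟩ ?_⟩
  rintro c ⟨x', y', hd', rfl⟩
  exact (diag_le T x' y' hd').2

/-- If both Hankel matrices `h` and `k` are trace class, then
`Σ |φ(n) - φ(n+1)| ≤ ‖h‖₁ + ‖k‖₁ < ∞`. -/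
theorem stmt1 (φ : ℕ → ℂ) (h k : l2 →L[ℂ] l2)
    (hTC : TraceClass h) (kTC : TraceClass k)
    (hH : HasHankel h (fun n => φ n - φ (n + 1)))
    (kH : HasHankel k (fun n => φ (n + 1) - φ (n + 2))) :
    Summable (fun n => ‖φ n - φ (n + 1)‖) ∧
      ∑' n : ℕ, ‖φ n - φ (n + 1)‖ ≤ traceNorm h + traceNorm k := by
  obtain ⟨hsum, hle⟩ := diag_le_traceNorm h hTC
  obtain ⟨ksum, kle⟩ := diag_le_traceNorm k kTC
  set f : ℕ → ℝ := fun n => ‖φ n - φ (n + 1)‖ with hf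
  have heven : ∀ i, f (2 * i) = ‖(inner ℂ (eb i) (h (eb i)) : ℂ)‖ := by
    intro i
    rw [hH i i]
    simp [f, two_mul]
  have hodd : ∀ i, f (2 * i + 1) = ‖(inner ℂ (eb i) (k (eb i)) : ℂ)‖ := by
    intro i
    rw [kH i i]
    have : i + i + 1 + 1 = 2 * i + 1 + 1 := by ring
    simp only [f, two_mul, this]
  have he : HasSum (fun i => f (2 * i)) (∑' i, ‖(inner ℂ (eb i) (h (eb i)) : ℂ)‖) := by
    rw [funext heven]; exact hsum.hasSum
  have ho : HasSum (fun i => f (2 * i + 1)) (∑' i, ‖(inner ℂ (eb i) (k (eb i)) : ℂ)‖) := by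
    rw [funext hodd]; exact ksum.hasSum
  have hfull := he.even_add_odd ho
  exact ⟨hfull.summable, hfull.tsum_eq ▸ add_le_add hle kle⟩
end
end

section
/- Let φ : ℕ → ℂ with Σ|φ(n)-φ(n+1)| < ∞, let ψ₁(n) = Σ_{i≥0}(φ(n+2i)-φ(n+2i+1)), and suppose the Hankel matrix h = (φ(i+j)-φ(i+j+1))_{i,j≥0} is trace class with decomposition h = Σ_{i=1}^∞ x_i ⊙ y_i where x_i, y_i ∈ ℓ²(ℕ) and Σ ‖x_i‖₂‖y_i‖₂ = ‖h‖₁. Then for all k, l ≥ 0, ψ₁(k+l) = Σ_{i=1}^∞ Σ_{t=0}^∞ x_i(k+t) · conj(y_i(l+t)), with the double series absolutely convergent. -/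
open scoped ComplexConjugate
open Filter
noncomputable section

/-- Shifted Cauchy–Schwarz: partial sums of `‖u (k+t)‖ * ‖v (l+t)‖` are bounded
by `‖u‖ * ‖v‖`. -/
lemma shifted_cs (u v : l2) (k l : ℕ) (s : Finset ℕ) :
    ∑ t ∈ s, ‖u (k + t)‖ * ‖v (l + t)‖ ≤ ‖u‖ * ‖v‖ := by
  have sq_bound : ∀ (w : l2) (m : ℕ), ∑ t ∈ s, ‖w (m + t)‖ ^ 2 ≤ ‖w‖ ^ 2 := by
    intro w m
    have := lp.sum_rpow_le_norm_rpow (p := 2) (by norm_num) w (s.image (m + ·))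
    simp only [ENNReal.toReal_ofNat] at this
    rw [Finset.sum_image (by intro a _ b _ hab; exact Nat.add_left_cancel hab)] at this
    rw [show (2:ℝ) = ((2:ℕ):ℝ) by norm_num] at this
    simp only [Real.rpow_natCast] at this
    exact this
  have hcs := Finset.sum_mul_sq_le_sq_mul_sq s (fun t => ‖u (k + t)‖) (fun t => ‖v (l + t)‖)
  have hle : (∑ t ∈ s, ‖u (k + t)‖ * ‖v (l + t)‖) ^ 2 ≤ (‖u‖ * ‖v‖) ^ 2 := by
    calc (∑ t ∈ s, ‖u (k + t)‖ * ‖v (l + t)‖) ^ 2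
        ≤ (∑ t ∈ s, ‖u (k + t)‖ ^ 2) * ∑ t ∈ s, ‖v (l + t)‖ ^ 2 := hcs
      _ ≤ ‖u‖ ^ 2 * ‖v‖ ^ 2 := by
          exact mul_le_mul (sq_bound u k) (sq_bound v l)
            (Finset.sum_nonneg fun _ _ => sq_nonneg _) (sq_nonneg _)
      _ = (‖u‖ * ‖v‖) ^ 2 := by ring
  have h1 : (0:ℝ) ≤ ∑ t ∈ s, ‖u (k + t)‖ * ‖v (l + t)‖ :=
    Finset.sum_nonneg fun _ _ => mul_nonneg (norm_nonneg _) (norm_nonneg _)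
  have h2 : (0:ℝ) ≤ ‖u‖ * ‖v‖ := mul_nonneg (norm_nonneg _) (norm_nonneg _)
  nlinarith

/-- Entry formula for the decomposition. -/
lemma entry_hasSum (h : l2 →L[ℂ] l2) (x y : ℕ → l2)
    (hdec : IsTCDecomp h x y) (m n : ℕ) :
    HasSum (fun i => x i m * conj (y i n)) ((inner ℂ (eb m) (h (eb n)) : ℂ)) := by
  have H := (hdec.2 (eb n)).mapL (innerSL ℂ (eb m))
  convert H using 2 with i
  case e'_6 => rfl
  case e'_3 => rfl
  · have h1 : rankOne (x i) (y i) (eb n) = (inner ℂ (y i) (eb n) : ℂ) • x i := rfl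
    have h2 : (inner ℂ (y i) (eb n) : ℂ) = conj (y i n) := by
      simp [eb, lp.inner_single_right, RCLike.inner_apply]
    have h3 : (innerSL ℂ (eb m)) (x i) = x i m := by
      simp [eb, lp.inner_single_left, RCLike.inner_apply]
    simp only [innerSL_apply_apply, h1, inner_smul_right, h2]
    rw [show (inner ℂ (eb m) (x i) : ℂ) = x i m from h3]
    ring

/-- If `h = Σᵢ xᵢ ⊙ yᵢ` is a trace-norm-attaining rank-one decomposition of the
Hankel matrix `h` of `φ(·) - φ(·+1)`, then
`ψ₁(k+l) = Σᵢ Σₜ xᵢ(k+t) · conj(yᵢ(l+t))`, with absolute convergence. -/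
theorem stmt7 (φ : ℕ → ℂ)
    (hsum : Summable (fun n => ‖φ n - φ (n + 1)‖))
    (ψ₁ : ℕ → ℂ)
    (hψ₁ : ∀ n : ℕ, ψ₁ n = ∑' i : ℕ, (φ (n + 2 * i) - φ (n + 2 * i + 1)))
    (h : l2 →L[ℂ] l2) (hH : HasHankel h (fun n => φ n - φ (n + 1)))
    (x y : ℕ → l2) (hdec : IsTCDecomp h x y)
    (hnorm : ∑' i : ℕ, ‖x i‖ * ‖y i‖ = traceNorm h) :
    ∀ k l : ℕ,
      Summable (fun it : ℕ × ℕ =>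
        ‖x it.1 (k + it.2) * conj (y it.1 (l + it.2))‖) ∧
      ψ₁ (k + l) = ∑' i : ℕ, ∑' t : ℕ, x i (k + t) * conj (y i (l + t)) := by
  intro k l
  set F : ℕ × ℕ → ℂ := fun it => x it.1 (k + it.2) * conj (y it.1 (l + it.2)) with hF
  have habs : ∀ it : ℕ × ℕ, ‖F it‖ = ‖x it.1 (k + it.2)‖ * ‖y it.1 (l + it.2)‖ := by
    intro it
    simp [hF, norm_mul]
  -- summability of the norms
  have hslice : ∀ i : ℕ, Summable (fun t => ‖x i (k + t)‖ * ‖y i (l + t)‖) :=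
    fun i => summable_of_sum_le (fun t => mul_nonneg (norm_nonneg _) (norm_nonneg _))
      (shifted_cs (x i) (y i) k l)
  have hslice_le : ∀ i : ℕ, ∑' t, ‖x i (k + t)‖ * ‖y i (l + t)‖ ≤ ‖x i‖ * ‖y i‖ :=
    fun i => Summable.tsum_le_of_sum_le (hslice i) (shifted_cs (x i) (y i) k l)
  have hnormsum : Summable (fun it : ℕ × ℕ => ‖x it.1 (k + it.2)‖ * ‖y it.1 (l + it.2)‖) := by
    rw [summable_prod_of_nonneg (fun it => mul_nonneg (norm_nonneg _) (norm_nonneg _))]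
    exact ⟨hslice, hdec.1.of_nonneg_of_le
      (fun i => tsum_nonneg fun t => mul_nonneg (norm_nonneg _) (norm_nonneg _)) hslice_le⟩
  have hsummable_abs : Summable (fun it : ℕ × ℕ => ‖F it‖) := by
    simpa only [habs] using hnormsum
  refine ⟨hsummable_abs, ?_⟩
  have hFsummable : Summable F := by
    apply Summable.of_norm
    exact hsummable_abs
  -- diagonal sums
  have hdiag : ∀ t : ℕ, HasSum (fun i => F (i, t)) (φ (k + l + 2 * t) - φ (k + l + 2 * t + 1)) := by
    intro t
    have := entry_hasSum h x y hdec (k + t) (l + t)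
    rw [hH (k + t) (l + t)] at this
    have harith : (k + t) + (l + t) = k + l + 2 * t := by omega
    rw [harith] at this
    exact this
  -- swap order of summation
  have hswap : ∑' t, ∑' i, F (i, t) = ∑' i, ∑' t, F (i, t) := by
    exact Summable.tsum_comm (f := fun i t => F (i, t))
      (by exact hFsummable)
  calc ψ₁ (k + l) = ∑' t : ℕ, (φ (k + l + 2 * t) - φ (k + l + 2 * t + 1)) := hψ₁ (k + l)
    _ = ∑' t, ∑' i, F (i, t) := by
        exact tsum_congr fun t => ((hdiag t).tsum_eq).symm
    _ = ∑' i, ∑' t, F (i, t) := hswap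
    _ = ∑' i : ℕ, ∑' t : ℕ, x i (k + t) * conj (y i (l + t)) := rfl
end
end

section
/- Let φ ∈ C (so h = (φ(i+j)-φ(i+j+1)) and k = (φ(i+j+1)-φ(i+j+2)) are trace class, c = lim φ(n)), and let ψ₁(n) = Σ_{i≥0}(φ(n+2i)-φ(n+2i+1)), ψ₂(n) = ψ₁(n+1). Then sup_n |ψ₁(n)| ≤ ‖h‖₁ and sup_n |ψ₂(n)| ≤ ‖k‖₁. -/
open scoped ComplexConjugate
open Filter
noncomputable section

namespace Stmt14Aux

lemma two_pos : (0 : ℝ) < (2 : ENNReal).toReal := by norm_num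

lemma summable_sq (v : l2) :
    Summable fun t : ℕ => ‖v t‖ ^ ((2 : ENNReal)).toReal :=
  (lp.memℓp v).summable two_pos

lemma summable_sq_shift (n : ℕ) (v : l2) :
    Summable fun t : ℕ => ‖v (n + t)‖ ^ ((2 : ENNReal)).toReal := by
  have := (summable_sq v).comp_injective (add_right_injective n)
  simpa [Function.comp_def] using this

/-- The shifted sequence `t ↦ v (n + t)` as an element of `ℓ²`. -/
def shiftL (n : ℕ) (v : l2) : l2 :=
  ⟨fun t => v (n + t), memℓp_gen (summable_sq_shift n v)⟩

@[simp] lemma shiftL_apply (n : ℕ) (v : l2) (t : ℕ) : (shiftL n v) t = v (n + t) := rfl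

lemma norm_shiftL_le (n : ℕ) (v : l2) : ‖shiftL n v‖ ≤ ‖v‖ := by
  rw [← Real.rpow_le_rpow_iff (norm_nonneg _) (norm_nonneg _) two_pos,
    lp.norm_rpow_eq_tsum two_pos, lp.norm_rpow_eq_tsum two_pos]
  have := tsum_comp_le_tsum_of_inj ((lp.memℓp v).summable two_pos)
    (fun a => Real.rpow_nonneg (norm_nonneg _) _) (add_right_injective n)
  simpa [Function.comp_def] using this

/-- The sequence of absolute values of the entries of `v`, as an element of `ℓ²`. -/
def absL (v : l2) : l2 :=
  ⟨fun t => (‖v t‖ : ℂ), memℓp_gen (by simpa using summable_sq v)⟩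

@[simp] lemma absL_apply (v : l2) (t : ℕ) : (absL v) t = (‖v t‖ : ℂ) := rfl

lemma norm_absL (v : l2) : ‖absL v‖ = ‖v‖ := by
  have h : ‖absL v‖ ^ ((2 : ENNReal)).toReal = ‖v‖ ^ ((2 : ENNReal)).toReal := by
    rw [lp.norm_rpow_eq_tsum two_pos, lp.norm_rpow_eq_tsum two_pos]
    exact tsum_congr fun t => by simp
  exact le_antisymm
    ((Real.rpow_le_rpow_iff (norm_nonneg _) (norm_nonneg _) two_pos).mp h.le)
    ((Real.rpow_le_rpow_iff (norm_nonneg _) (norm_nonneg _) two_pos).mp h.ge)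

lemma rpow_two_eq (r : ℝ) : r ^ ((2 : ENNReal)).toReal = r ^ 2 := by
  rw [show ((2 : ENNReal)).toReal = ((2 : ℕ) : ℝ) by norm_num, Real.rpow_natCast]

lemma summable_mul_shift (n : ℕ) (x y : l2) :
    Summable fun t : ℕ => ‖y t‖ * ‖x (n + t)‖ := by
  refine Summable.of_nonneg_of_le
    (fun t => mul_nonneg (norm_nonneg _) (norm_nonneg _))
    (fun t => ?_) (((summable_sq y).add (summable_sq_shift n x)).div_const 2)
  rw [rpow_two_eq, rpow_two_eq]
  nlinarith [sq_nonneg (‖y t‖ - ‖x (n + t)‖)]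

/-- Cauchy–Schwarz for the shifted pairing. -/
lemma tsum_mul_shift_le (n : ℕ) (x y : l2) :
    ∑' t : ℕ, ‖y t‖ * ‖x (n + t)‖ ≤ ‖x‖ * ‖y‖ := by
  set Y : l2 := absL y
  set Z : l2 := absL (shiftL n x)
  have h1 : (inner ℂ Y Z : ℂ) = ((∑' t : ℕ, ‖y t‖ * ‖x (n + t)‖ : ℝ) : ℂ) := by
    rw [lp.inner_eq_tsum]
    have hterm : ∀ t : ℕ, (inner ℂ (Y t) (Z t) : ℂ) = ((‖y t‖ * ‖x (n + t)‖ : ℝ) : ℂ) := by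
      intro t
      simp [Y, Z, RCLike.inner_apply, Complex.conj_ofReal, mul_comm]
    rw [tsum_congr hterm]
    exact (Complex.ofReal_tsum _).symm
  calc ∑' t : ℕ, ‖y t‖ * ‖x (n + t)‖
      ≤ ‖(inner ℂ Y Z : ℂ)‖ := by
        rw [h1, Complex.norm_real]
        exact le_abs_self _
    _ ≤ ‖Y‖ * ‖Z‖ := norm_inner_le_norm _ _
    _ ≤ ‖y‖ * ‖x‖ := by
        have := norm_shiftL_le n x
        have hY : ‖Y‖ = ‖y‖ := norm_absL y
        have hZ : ‖Z‖ ≤ ‖x‖ := by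
          rw [show ‖Z‖ = ‖shiftL n x‖ from norm_absL _]
          exact norm_shiftL_le n x
        exact mul_le_mul hY.le hZ (norm_nonneg _) (norm_nonneg _)
    _ = ‖x‖ * ‖y‖ := mul_comm _ _

/-- The key estimate: for any trace-class decomposition of a Hankel operator `T`
with symbol `a`, the "diagonal partial sum" `∑ₜ a (n + 2t)` is bounded by the
decomposition's nuclear norm. -/
lemma key (T : l2 →L[ℂ] l2) (a : ℕ → ℂ)
    (hHa : ∀ i j : ℕ, (inner ℂ (eb i) (T (eb j)) : ℂ) = a (i + j))
    (x y : ℕ → l2) (hd : IsTCDecomp T x y) (n : ℕ) :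
    ‖∑' t : ℕ, a (n + 2 * t)‖ ≤ ∑' i, ‖x i‖ * ‖y i‖ := by
  classical
  set F : ℕ × ℕ → ℂ := fun p => (conj (y p.1 p.2)) * (x p.1 (n + p.2)) with hFdef
  have hA : ∀ t : ℕ, HasSum (fun i => F (i, t)) (a (n + 2 * t)) := by
    intro t
    have h0 := (hd.2 (eb t)).mapL (innerSL ℂ (eb (n + t)))
    have h1 : ∀ i, innerSL ℂ (eb (n + t)) (rankOne (x i) (y i) (eb t)) = F (i, t) := by
      intro i
      simp only [innerSL_apply_apply, rankOne, ContinuousLinearMap.smulRight_apply,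
        inner_smul_right, eb, hFdef]
      rw [lp.inner_single_right, lp.inner_single_left]
      simp [mul_comm]
    have h2 : innerSL ℂ (eb (n + t)) (T (eb t)) = a (n + 2 * t) := by
      rw [innerSL_apply_apply, hHa (n + t) t]
      congr 1
      ring
    rw [h2] at h0
    exact h0.congr_fun fun i => (h1 i).symm
  have hFnorm : ∀ p : ℕ × ℕ, ‖F p‖ = ‖y p.1 p.2‖ * ‖x p.1 (n + p.2)‖ := fun p => by
    simp [hFdef]
  have hBs : Summable fun p : ℕ × ℕ => ‖F p‖ := by
    rw [summable_prod_of_nonneg (fun p => norm_nonneg _)]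
    constructor
    · intro i
      simpa only [hFnorm] using summable_mul_shift n (x i) (y i)
    · refine Summable.of_nonneg_of_le (fun i => tsum_nonneg fun t => norm_nonneg _)
        (fun i => ?_) hd.1
      calc ∑' t : ℕ, ‖F (i, t)‖ = ∑' t : ℕ, ‖y i t‖ * ‖x i (n + t)‖ :=
            tsum_congr fun t => hFnorm (i, t)
        _ ≤ ‖x i‖ * ‖y i‖ := tsum_mul_shift_le n (x i) (y i)
  have hF : Summable F := hBs.of_norm
  have e1 : ∑' t : ℕ, a (n + 2 * t) = ∑' p : ℕ × ℕ, F p := by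
    have hh := (hF.prod_symm.hasSum.prod_fiberwise hA).tsum_eq
    have hswap : ∑' b : ℕ × ℕ, F b.swap = ∑' p : ℕ × ℕ, F p := by
      simpa using (Equiv.prodComm ℕ ℕ).tsum_eq (f := F)
    exact hh.trans hswap
  have e2 : ∑' p : ℕ × ℕ, F p = ∑' i, ∑' t, F (i, t) := Summable.tsum_prod' hF hF.prod_factor
  have hsummass : ∀ i, ‖∑' t, F (i, t)‖ ≤ ‖x i‖ * ‖y i‖ := by
    intro i
    have hs : Summable fun t => ‖F (i, t)‖ := by
      simpa only [hFnorm] using summable_mul_shift n (x i) (y i)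
    calc ‖∑' t, F (i, t)‖ ≤ ∑' t, ‖F (i, t)‖ := norm_tsum_le_tsum_norm hs
      _ = ∑' t : ℕ, ‖y i t‖ * ‖x i (n + t)‖ := tsum_congr fun t => hFnorm (i, t)
      _ ≤ ‖x i‖ * ‖y i‖ := tsum_mul_shift_le n (x i) (y i)
  have hsum2 : Summable fun i => ‖∑' t, F (i, t)‖ :=
    Summable.of_nonneg_of_le (fun i => norm_nonneg _) hsummass hd.1
  calc ‖∑' t : ℕ, a (n + 2 * t)‖ = ‖∑' i, ∑' t, F (i, t)‖ := by
        rw [e1, e2]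
    _ ≤ ∑' i, ‖∑' t, F (i, t)‖ := norm_tsum_le_tsum_norm hsum2
    _ ≤ ∑' i, ‖x i‖ * ‖y i‖ := Summable.tsum_le_tsum hsummass hsum2 hd.1

lemma key2 (T : l2 →L[ℂ] l2) (a : ℕ → ℂ) (hTC : TraceClass T) (hHa : HasHankel T a)
    (n : ℕ) : ‖∑' t : ℕ, a (n + 2 * t)‖ ≤ traceNorm T := by
  obtain ⟨x, y, hd⟩ := hTC
  refine le_csInf ⟨∑' i, ‖x i‖ * ‖y i‖, x, y, hd, rfl⟩ ?_
  rintro b ⟨x', y', hd', rfl⟩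
  exact key T a hHa x' y' hd' n

end Stmt14Aux

/-- If `h` and `k` are the (trace-class) Hankel matrices of `φ(·) - φ(·+1)` and
`φ(·+1) - φ(·+2)`, then `sup_n |ψ₁(n)| ≤ ‖h‖₁` and `sup_n |ψ₂(n)| ≤ ‖k‖₁`. -/
theorem stmt14 (φ : ℕ → ℂ) (h k : l2 →L[ℂ] l2)
    (hTC : TraceClass h) (kTC : TraceClass k)
    (hH : HasHankel h (fun n => φ n - φ (n + 1)))
    (kH : HasHankel k (fun n => φ (n + 1) - φ (n + 2)))
    (ψ₁ ψ₂ : ℕ → ℂ)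
    (hψ₁ : ∀ n : ℕ, ψ₁ n = ∑' i : ℕ, (φ (n + 2 * i) - φ (n + 2 * i + 1)))
    (hψ₂ : ∀ n : ℕ, ψ₂ n = ψ₁ (n + 1)) :
    (∀ n : ℕ, ‖ψ₁ n‖ ≤ traceNorm h) ∧
    (∀ n : ℕ, ‖ψ₂ n‖ ≤ traceNorm k) := by
  constructor
  · intro n
    rw [hψ₁ n]
    exact Stmt14Aux.key2 h _ hTC hH n
  · intro n
    rw [hψ₂ n, hψ₁ (n + 1)]
    have := Stmt14Aux.key2 k _ kTC kH n
    have e : ∀ i : ℕ, φ (n + 1 + 2 * i) - φ (n + 1 + 2 * i + 1)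
        = φ (n + 2 * i + 1) - φ (n + 2 * i + 2) := fun i => by
      rw [show n + 1 + 2 * i + 1 = n + 2 * i + 2 by ring,
        show n + 1 + 2 * i = n + 2 * i + 1 by ring]
    rw [tsum_congr e]
    exact this
end
end
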